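/- Let p ∈ [1,2] and X₁, …, X_n be ℝ^d-valued random vectors forming a martingale difference sequence (E[X_j | X_1,…,X_{j−1}] = 0 a.s.) with E[‖X_j‖^p] < ∞ for each j. Then E[‖∑_{j=1}^n X_j‖^p] ≤ 2·∑_{j=1}^n E[‖X_j‖^p]. -/

import Mathlib

open MeasureTheory Real
open scoped InnerProductSpace ENNReal


lemma vbe_concave {u v θ : ℝ} (hu : 0 ≤ u) (hv : 0 < v) (hθ1 : 0 ≤ θ) (hθ2 : θ ≤ 1) :
    u ^ θ ≤ v ^ θ + θ * v ^ (θ - 1) * (u - v) := by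
  have hs : (-1 : ℝ) ≤ u / v - 1 := by
    have : 0 ≤ u / v := div_nonneg hu hv.le
    linarith
  have h := rpow_one_add_le_one_add_mul_self hs hθ1 hθ2
  rw [add_sub_cancel] at h
  have hvθ : 0 < v ^ θ := rpow_pos_of_pos hv θ
  have h2 : (u / v) ^ θ * v ^ θ ≤ (1 + θ * (u / v - 1)) * v ^ θ :=
    mul_le_mul_of_nonneg_right h hvθ.le
  rw [Real.div_rpow hu hv.le, div_mul_cancel₀ _ (ne_of_gt hvθ)] at h2
  refine h2.trans_eq ?_
  have hB : v ^ (θ - 1) * v = v ^ θ := by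
    nth_rewrite 2 [← Real.rpow_one v]
    rw [← Real.rpow_add hv, sub_add_cancel]
  field_simp
  linear_combination θ * (v - u) * hB

lemma vbe_rpow_sq {c : ℝ} (hc : 0 ≤ c) (q : ℝ) : (c ^ 2) ^ (q / 2) = c ^ q := by
  rw [← Real.rpow_natCast c 2, ← Real.rpow_mul hc]
  norm_num
  rw [mul_div_cancel₀ _ (two_ne_zero)]

lemma vbe_rpow_add_self {a q : ℝ} (ha : 0 < a) : a ^ q * a = a ^ (q + 1) := by
  nth_rewrite 2 [← Real.rpow_one a]
  rw [← Real.rpow_add ha]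

lemma vbe_aux2 {p a : ℝ} (hp1 : 1 ≤ p) (ha : 0 ≤ a) : a ^ (p - 2) * a ≤ a ^ (p - 1) := by
  rcases eq_or_lt_of_le ha with h | h
  · rw [← h, mul_zero]
    exact Real.rpow_nonneg le_rfl _
  · rw [vbe_rpow_add_self h, show p - 2 + 1 = p - 1 by ring]

lemma vbe_aux3 {p a b : ℝ} (hp1 : 1 ≤ p) (ha : 0 ≤ a) (hb : 0 ≤ b) :
    a ^ (p - 1) * b ≤ a ^ p + b ^ p := by
  rcases eq_or_lt_of_le hb with h | hb0
  · rw [← h, mul_zero]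
    exact add_nonneg (Real.rpow_nonneg ha _) (Real.rpow_nonneg le_rfl _)
  rcases le_total a b with hab | hab
  · have h1 : a ^ (p - 1) ≤ b ^ (p - 1) := Real.rpow_le_rpow ha hab (by linarith)
    have h2 : b ^ (p - 1) * b = b ^ p := by
      rw [vbe_rpow_add_self hb0, sub_add_cancel]
    nlinarith [Real.rpow_nonneg ha p, mul_le_mul_of_nonneg_right h1 hb]
  · have ha0 : 0 < a := lt_of_lt_of_le hb0 hab
    have h2 : a ^ (p - 1) * a = a ^ p := by
      rw [vbe_rpow_add_self ha0, sub_add_cancel]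
    nlinarith [Real.rpow_nonneg le_rfl p, Real.rpow_nonneg hb p,
      mul_le_mul_of_nonneg_left hab (Real.rpow_nonneg ha (p - 1))]

lemma vbe_norm_bound {p a b : ℝ} (hp1 : 1 ≤ p) (ha : 0 ≤ a) (hb : 0 ≤ b) :
    a ^ (p - 2) * a * b ≤ a ^ p + b ^ p :=
  le_trans (mul_le_mul_of_nonneg_right (vbe_aux2 hp1 ha) hb) (vbe_aux3 hp1 ha hb)

section
variable {E : Type*} [NormedAddCommGroup E] [InnerProductSpace ℝ E]

lemma vbe_pointwise {p : ℝ} (hp1 : 1 ≤ p) (hp2 : p ≤ 2) (x y : E) :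
    ‖x + y‖ ^ p ≤ ‖x‖ ^ p + p * (‖x‖ ^ (p - 2) * ⟪x, y⟫_ℝ) + 2 * ‖y‖ ^ p := by
  have hp0 : (0:ℝ) < p := by linarith
  by_cases hx0 : x = 0
  · subst hx0
    have h0 : (0:ℝ) ≤ ‖(0:E)‖ ^ p := Real.rpow_nonneg (norm_nonneg _) p
    simp only [inner_zero_left, mul_zero, zero_add, add_zero]
    nlinarith [Real.rpow_nonneg (norm_nonneg (y : E)) p]
  set a := ‖x‖ with ha_def
  set b := ‖y‖ with hb_def
  set t := ⟪x, y⟫_ℝ with ht_def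
  have ha : 0 ≤ a := norm_nonneg x
  have hb : 0 ≤ b := norm_nonneg y
  have ha0 : 0 < a := norm_pos_iff.mpr hx0
  have habs : |t| ≤ a * b := abs_real_inner_le_norm x y
  have hsq : ‖x + y‖ ^ 2 = a ^ 2 + 2 * t + b ^ 2 := norm_add_sq_real x y
  have hc : 0 ≤ ‖x + y‖ := norm_nonneg _
  have hxyp : ‖x + y‖ ^ p = (‖x + y‖ ^ 2) ^ (p / 2) := (vbe_rpow_sq hc p).symm
  have hu : (0:ℝ) ≤ ‖x + y‖ ^ 2 := sq_nonneg _
  have hmt : -(a * b) ≤ t := (abs_le.mp habs).1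
  rcases le_or_gt b a with hba | hab
  · -- case b ≤ a
    have e1 : ((a^2 : ℝ)) ^ (p/2 - 1) = a ^ (p - 2) := by
      rw [show p/2 - 1 = (p-2)/2 by ring, vbe_rpow_sq ha]
    have hconc' : ‖x + y‖ ^ p ≤ a ^ p + p * (a ^ (p-2) * t) + (p/2) * (a ^ (p-2) * b ^ 2) := by
      calc ‖x + y‖ ^ p = (‖x + y‖ ^ 2) ^ (p / 2) := hxyp
        _ ≤ (a^2) ^ (p/2) + (p/2) * (a^2) ^ (p/2 - 1) * (‖x + y‖ ^ 2 - a^2) :=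
            vbe_concave hu (by positivity) (by linarith) (by linarith)
        _ = a ^ p + p * (a ^ (p-2) * t) + (p/2) * (a ^ (p-2) * b ^ 2) := by
            rw [vbe_rpow_sq ha, e1, hsq]; ring
    have hlast : (p/2) * (a ^ (p-2) * b ^ 2) ≤ 2 * b ^ p := by
      rcases eq_or_lt_of_le hb with h | hb0
      · rw [← h]
        rw [show ((0:ℝ)^2) = 0 by ring, Real.zero_rpow hp0.ne']
        simp
      · have h1 : a ^ (p-2) ≤ b ^ (p-2) := Real.rpow_le_rpow_of_nonpos hb0 hba (by linarith)
        have h2 : b ^ (p-2) * b ^ 2 = b ^ p := by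
          rw [← Real.rpow_natCast b 2, ← Real.rpow_add hb0]
          norm_num
        have hY := mul_le_mul_of_nonneg_right h1 (sq_nonneg b)
        have hY0 : (0:ℝ) ≤ a ^ (p-2) * b ^ 2 :=
          mul_nonneg (Real.rpow_nonneg ha _) (sq_nonneg b)
        have h1' := mul_nonneg (show (0:ℝ) ≤ 2 - p by linarith) hY0
        linarith [Real.rpow_nonneg hb p]
    linarith
  · -- case a < b
    have hb0 : 0 < b := lt_trans ha0 hab
    have e1b : ((b^2 : ℝ)) ^ (p/2 - 1) = b ^ (p - 2) := by
      rw [show p/2 - 1 = (p-2)/2 by ring, vbe_rpow_sq hb]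
    have hconc' : ‖x + y‖ ^ p ≤ b ^ p + (p/2) * (b ^ (p-2) * a ^ 2) + p * (b ^ (p-2) * t) := by
      calc ‖x + y‖ ^ p = (‖x + y‖ ^ 2) ^ (p / 2) := hxyp
        _ ≤ (b^2) ^ (p/2) + (p/2) * (b^2) ^ (p/2 - 1) * (‖x + y‖ ^ 2 - b^2) :=
            vbe_concave hu (by positivity) (by linarith) (by linarith)
        _ = b ^ p + (p/2) * (b ^ (p-2) * a ^ 2) + p * (b ^ (p-2) * t) := by
            rw [vbe_rpow_sq hb, e1b, hsq]; ring
    have h1 : b ^ (p-2) ≤ a ^ (p-2) := Real.rpow_le_rpow_of_nonpos ha0 hab.le (by linarith)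
    have h2 : a ^ (p-2) * a ^ 2 = a ^ p := by
      rw [← Real.rpow_natCast a 2, ← Real.rpow_add ha0]
      norm_num
    have h3 : a ^ (p-2) * a = a ^ (p-1) := by
      rw [vbe_rpow_add_self ha0, show p - 2 + 1 = p - 1 by ring]
    have h4 : b ^ (p-2) * b = b ^ (p-1) := by
      rw [vbe_rpow_add_self hb0, show p - 2 + 1 = p - 1 by ring]
    have hbp1 : b ^ (p-1) * b = b ^ p := by
      rw [vbe_rpow_add_self hb0, sub_add_cancel]
    -- f2
    have hX : b ^ (p-2) * a ^ 2 ≤ a ^ p := by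
      have := mul_le_mul_of_nonneg_right h1 (sq_nonneg a)
      linarith [h2]
    have hX0 : (0:ℝ) ≤ b ^ (p-2) * a ^ 2 :=
      mul_nonneg (Real.rpow_nonneg hb _) (sq_nonneg a)
    have f2 : (p/2) * (b ^ (p-2) * a ^ 2) ≤ a ^ p := by
      have h1' := mul_nonneg (show (0:ℝ) ≤ 2 - p by linarith) hX0
      linarith
    -- f3
    have hd : 0 ≤ a ^ (p-2) - b ^ (p-2) := by linarith
    have step := mul_le_mul_of_nonneg_right hmt hd
    have step2 := mul_le_mul_of_nonneg_left step hp0.le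
    have eq1 : p * ((a*b) * (a ^ (p-2) - b ^ (p-2))) = p * (a ^ (p-1) * b) - p * (a * b ^ (p-1)) := by
      linear_combination (p*b) * h3 - (p*a) * h4
    have f3 : p * (b ^ (p-2) * t) - p * (a ^ (p-2) * t) ≤ p * (a ^ (p-1) * b) - p * (a * b ^ (p-1)) := by
      linarith [step2, eq1]
    -- f5 via r = a / b
    set r := a / b with hr_def
    have hr0 : 0 ≤ r := div_nonneg ha hb
    have hr1 : r ≤ 1 := (div_le_one hb0).mpr hab.le
    have young : r ^ (p-1) ≤ 1 + (p-1) * (r - 1) := by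
      have h := rpow_one_add_le_one_add_mul_self (s := r - 1) (by linarith)
        (p := p - 1) (by linarith) (by linarith)
      rwa [add_sub_cancel] at h
    have hc0 : (0:ℝ) ≤ p * (2 - p) := mul_nonneg hp0.le (by linarith)
    have hcr : p * (2 - p) * (1 - r) ≤ p * (2 - p) := by
      have := mul_le_mul_of_nonneg_left (show 1 - r ≤ 1 by linarith) hc0
      linarith
    have hc1 : p * (2 - p) ≤ 1 := by nlinarith [sq_nonneg (p - 1)]
    have key : p * r ^ (p-1) - p * r ≤ 1 := by
      have h6 := mul_le_mul_of_nonneg_left young hp0.le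
      linarith [h6, hcr, hc1]
    have hab' : a = r * b := (div_mul_cancel₀ a hb0.ne').symm
    have e5 : a ^ (p-1) * b = r ^ (p-1) * b ^ p := by
      rw [hab', Real.mul_rpow hr0 hb]
      linear_combination r ^ (p-1) * hbp1
    have e6 : a * b ^ (p-1) = r * b ^ p := by
      rw [hab']
      linear_combination r * hbp1
    have f5 : p * (a ^ (p-1) * b) - p * (a * b ^ (p-1)) ≤ b ^ p := by
      have hbpn : (0:ℝ) ≤ b ^ p := Real.rpow_nonneg hb p
      have := mul_le_mul_of_nonneg_right key hbpn
      rw [e5, e6]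
      linarith [this]
    linarith
end


lemma vbe_abs_coord {d : ℕ} (x : EuclideanSpace ℝ (Fin d)) (i : Fin d) : |x i| ≤ ‖x‖ := by
  rw [EuclideanSpace.norm_eq, ← Real.sqrt_sq_eq_abs]
  apply Real.sqrt_le_sqrt
  calc (x i) ^ 2 = ‖x i‖ ^ 2 := by rw [Real.norm_eq_abs, sq_abs]
    _ ≤ ∑ j, ‖x j‖ ^ 2 :=
        Finset.single_le_sum (f := fun j => ‖x j‖ ^ 2) (fun j _ => sq_nonneg _)
          (Finset.mem_univ i)

lemma vbe_integral_inner_eq_zero {Ω : Type*} {m : MeasurableSpace Ω} [inst : MeasurableSpace Ω]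
    (P : Measure Ω) [IsProbabilityMeasure P] {d : ℕ} (hm : m ≤ inst)
    {G X : Ω → EuclideanSpace ℝ (Fin d)}
    (hG : Measurable[m] G) (hX : Measurable X) (hXi : Integrable X P)
    (hbound : Integrable (fun ω => ‖G ω‖ * ‖X ω‖) P)
    (hcond : P[X | m] =ᵐ[P] 0) :
    ∫ ω, ⟪G ω, X ω⟫_ℝ ∂P = 0 := by
  haveI : SigmaFinite (P.trim hm) := by
    haveI := isFiniteMeasure_trim (μ := P) hm
    infer_instance
  have hGm : Measurable[inst] G := hG.mono hm le_rfl
  have hXii : ∀ i : Fin d, Integrable (fun ω => X ω i) P := fun i =>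
    (EuclideanSpace.proj (𝕜 := ℝ) i).integrable_comp hXi
  have hci : ∀ i : Fin d, P[(fun ω => X ω i) | m] =ᵐ[P] (fun _ => (0:ℝ)) := by
    intro i
    refine (ae_eq_condExp_of_forall_setIntegral_eq hm (hXii i)
      (fun s _ _ => (integrable_zero _ _ _).integrableOn)
      (fun s hs hμs => ?_) ?_).symm
    · have h0 : ∫ ω in s, X ω ∂P = 0 := by
        rw [← setIntegral_condExp hm hXi hs]
        calc ∫ ω in s, (P[X|m]) ω ∂P = ∫ ω in s, (0 : EuclideanSpace ℝ (Fin d)) ∂P :=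
              integral_congr_ae (ae_restrict_of_ae hcond)
          _ = 0 := by simp
      have hcc := (EuclideanSpace.proj (𝕜 := ℝ) i).integral_comp_comm
        (hXi.integrableOn (s := s))
      simp only [Pi.zero_apply, integral_zero]
      rw [show (fun ω => X ω i) = fun ω => (EuclideanSpace.proj (𝕜 := ℝ) i) (X ω) from rfl]
      rw [hcc, h0]
      simp
    · exact ⟨fun _ => (0:ℝ), stronglyMeasurable_const, Filter.EventuallyEq.rfl⟩
  -- products integrable
  have hprod : ∀ i : Fin d, Integrable (fun ω => G ω i * X ω i) P := by
    intro i
    refine hbound.mono' ?_ ?_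
    · exact (((measurable_pi_apply i).comp ((WithLp.measurable_ofLp _ _).comp hGm)).mul
        ((measurable_pi_apply i).comp ((WithLp.measurable_ofLp _ _).comp hX))).aestronglyMeasurable (μ := P)
    · filter_upwards with ω
      rw [Real.norm_eq_abs, abs_mul]
      exact mul_le_mul (vbe_abs_coord _ i) (vbe_abs_coord _ i) (abs_nonneg _) (norm_nonneg _)
  have hinner : (fun ω => ⟪G ω, X ω⟫_ℝ) = fun ω => ∑ i, G ω i * X ω i := by
    funext ω
    rw [PiLp.inner_apply]
    simp [RCLike.inner_apply, conj_trivial]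
    exact Finset.sum_congr rfl fun _ _ => mul_comm _ _
  rw [hinner, integral_finset_sum _ (fun i _ => hprod i)]
  refine Finset.sum_eq_zero fun i _ => ?_
  have hGi : StronglyMeasurable[m] (fun ω => G ω i) :=
    ((measurable_pi_apply i).comp ((WithLp.measurable_ofLp _ _).comp hG)).stronglyMeasurable
  have hpull := condExp_mul_of_stronglyMeasurable_left (μ := P) (m := m) hGi
    (f := fun ω => G ω i) (g := fun ω => X ω i) (hprod i) (hXii i)
  have hz : P[(fun ω => G ω i) * (fun ω => X ω i) | m] =ᵐ[P] (fun _ => (0:ℝ)) := by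
    refine hpull.trans ?_
    filter_upwards [hci i] with ω hω
    simp only [Pi.mul_apply, hω]
    simp
  calc ∫ ω, G ω i * X ω i ∂P
      = ∫ ω, (P[(fun ω => G ω i) * (fun ω => X ω i) | m]) ω ∂P :=
        (integral_condExp hm (f := (fun ω => G ω i) * (fun ω => X ω i))).symm
    _ = ∫ _ω, (0:ℝ) ∂P := integral_congr_ae hz
    _ = 0 := by simp

theorem von_bahr_esseen_mds {Ω : Type*} [MeasurableSpace Ω] (P : Measure Ω)
    [IsProbabilityMeasure P] {d n : ℕ} (p : ℝ) (hp1 : 1 ≤ p) (hp2 : p ≤ 2)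
    (X : ℕ → Ω → EuclideanSpace ℝ (Fin d))
    (hmeas : ∀ j, Measurable (X j))
    (hint : ∀ j ∈ Finset.Icc 1 n, ∫⁻ ω, ENNReal.ofReal (‖X j ω‖ ^ p) ∂P < ⊤)
    (hmds : ∀ j ∈ Finset.Icc 1 n,
      P[X j | ⨆ i ∈ Finset.Ico 1 j, MeasurableSpace.comap (X i) inferInstance] =ᵐ[P] 0) :
    ∫ ω, ‖∑ j ∈ Finset.Icc 1 n, X j ω‖ ^ p ∂P
      ≤ 2 * ∑ j ∈ Finset.Icc 1 n, ∫ ω, ‖X j ω‖ ^ p ∂P := by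
  have hp0 : (0:ℝ) < p := lt_of_lt_of_le one_pos hp1
  set q : ℝ≥0∞ := ENNReal.ofReal p with hq
  have hq0 : q ≠ 0 := by simp [hq, ENNReal.ofReal_eq_zero, not_le, hp0]
  have hqt : q ≠ ⊤ := ENNReal.ofReal_ne_top
  have hmem : ∀ j ∈ Finset.Icc 1 n, MemLp (X j) q P := by
    intro j hj
    refine ⟨(hmeas j).aestronglyMeasurable, ?_⟩
    rw [eLpNorm_eq_lintegral_rpow_enorm_toReal hq0 hqt]
    refine ENNReal.rpow_lt_top_of_nonneg (by positivity) ?_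
    have heq : ∀ ω : Ω, ((‖X j ω‖₊ : ℝ≥0∞)) ^ q.toReal = ENNReal.ofReal (‖X j ω‖ ^ p) := by
      intro ω
      rw [hq, ENNReal.toReal_ofReal hp0.le, ← enorm_eq_nnnorm, ← ofReal_norm,
        ← ENNReal.ofReal_rpow_of_nonneg (norm_nonneg _) hp0.le]
    calc ∫⁻ ω, ((‖X j ω‖₊ : ℝ≥0∞)) ^ q.toReal ∂P
        = ∫⁻ ω, ENNReal.ofReal (‖X j ω‖ ^ p) ∂P := lintegral_congr heq
      _ ≠ ⊤ := (hint j hj).ne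
  have hintp : ∀ f : Ω → EuclideanSpace ℝ (Fin d), MemLp f q P →
      Integrable (fun ω => ‖f ω‖ ^ p) P := by
    intro f hf
    have h := hf.integrable_norm_rpow hq0 hqt
    simpa [hq, ENNReal.toReal_ofReal hp0.le] using h
  suffices H : ∀ k, k ≤ n →
      ∫ ω, ‖∑ j ∈ Finset.Icc 1 k, X j ω‖ ^ p ∂P
        ≤ 2 * ∑ j ∈ Finset.Icc 1 k, ∫ ω, ‖X j ω‖ ^ p ∂P by
    exact H n le_rfl
  intro k
  induction k with
  | zero =>
    intro _
    rw [show Finset.Icc 1 0 = (∅ : Finset ℕ) from Finset.Icc_eq_empty (by omega)]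
    simp [Real.zero_rpow hp0.ne']
  | succ k ih =>
    intro hk1
    have hk : k ≤ n := Nat.le_of_succ_le hk1
    have hsub : Finset.Icc 1 k ⊆ Finset.Icc 1 n := Finset.Icc_subset_Icc_right hk
    have hsub1 : Finset.Icc 1 (k+1) ⊆ Finset.Icc 1 n := Finset.Icc_subset_Icc_right hk1
    have hk1mem : k + 1 ∈ Finset.Icc 1 n := Finset.mem_Icc.mpr ⟨by omega, hk1⟩
    set S : Ω → EuclideanSpace ℝ (Fin d) := fun ω => ∑ j ∈ Finset.Icc 1 k, X j ω with hS
    set Y : Ω → EuclideanSpace ℝ (Fin d) := X (k+1) with hY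
    have hmemS : MemLp S q P := memLp_finset_sum _ fun j hj => hmem j (hsub hj)
    have hmemY : MemLp Y q P := hmem _ hk1mem
    have hSp : Integrable (fun ω => ‖S ω‖ ^ p) P := hintp _ hmemS
    have hYp : Integrable (fun ω => ‖Y ω‖ ^ p) P := hintp _ hmemY
    have hYint : Integrable Y P := hmemY.integrable (by rw [hq]; exact ENNReal.one_le_ofReal.mpr hp1)
    have hSmeas : Measurable S := Finset.measurable_sum _ fun j _ => hmeas j
    have hS'mem : MemLp (fun ω => ∑ j ∈ Finset.Icc 1 (k+1), X j ω) q P :=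
      memLp_finset_sum _ fun j hj => hmem j (hsub1 hj)
    have hS'p : Integrable (fun ω => ‖∑ j ∈ Finset.Icc 1 (k+1), X j ω‖ ^ p) P := hintp _ hS'mem
    have hsum : ∀ ω, ∑ j ∈ Finset.Icc 1 (k+1), X j ω = S ω + Y ω := fun ω =>
      Finset.sum_Icc_succ_top (by omega) _
    -- integrability of the cross term
    have hcross : ∀ ω, |‖S ω‖ ^ (p-2) * ⟪S ω, Y ω⟫_ℝ| ≤ ‖S ω‖ ^ p + ‖Y ω‖ ^ p := by
      intro ω
      have h1 : |⟪S ω, Y ω⟫_ℝ| ≤ ‖S ω‖ * ‖Y ω‖ := abs_real_inner_le_norm _ _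
      have h2 : (0:ℝ) ≤ ‖S ω‖ ^ (p-2) := Real.rpow_nonneg (norm_nonneg _) _
      calc |‖S ω‖ ^ (p-2) * ⟪S ω, Y ω⟫_ℝ| = ‖S ω‖ ^ (p-2) * |⟪S ω, Y ω⟫_ℝ| := by
            rw [abs_mul, abs_of_nonneg h2]
        _ ≤ ‖S ω‖ ^ (p-2) * (‖S ω‖ * ‖Y ω‖) := mul_le_mul_of_nonneg_left h1 h2
        _ = ‖S ω‖ ^ (p-2) * ‖S ω‖ * ‖Y ω‖ := by ring
        _ ≤ ‖S ω‖ ^ p + ‖Y ω‖ ^ p := vbe_norm_bound hp1 (norm_nonneg _) (norm_nonneg _)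
    have hMint : Integrable (fun ω => p * (‖S ω‖ ^ (p-2) * ⟪S ω, Y ω⟫_ℝ)) P := by
      refine ((hSp.add hYp).const_mul p).mono' ?_ ?_
      · exact (((hSmeas.norm.pow measurable_const).mul
          (hSmeas.inner (hmeas (k+1)))).const_mul p).aestronglyMeasurable
      · filter_upwards with ω
        rw [Real.norm_eq_abs, abs_mul, abs_of_nonneg hp0.le]
        exact mul_le_mul_of_nonneg_left (hcross ω) hp0.le
    -- the cross term has zero integral
    have hMzero : ∫ ω, p * (‖S ω‖ ^ (p-2) * ⟪S ω, Y ω⟫_ℝ) ∂P = 0 := by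
      have hcond := hmds (k+1) hk1mem
      have hle : (⨆ i ∈ Finset.Ico 1 (k+1), MeasurableSpace.comap (X i) inferInstance) ≤ _ :=
        iSup₂_le fun i _ => (hmeas i).comap_le
      have hSm : Measurable[⨆ i ∈ Finset.Ico 1 (k+1),
          MeasurableSpace.comap (X i) inferInstance] S := by
        refine Finset.measurable_sum _ fun j hj => ?_
        have hj' : j ∈ Finset.Ico 1 (k+1) := by
          rw [Finset.Ico_add_one_right_eq_Icc]; exact hj
        exact (Measurable.of_comap_le le_rfl).mono
          (le_iSup₂ (f := fun i (_ : i ∈ Finset.Ico 1 (k+1)) =>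
            MeasurableSpace.comap (X i) inferInstance) j hj') le_rfl
      have hφ : Measurable fun v : EuclideanSpace ℝ (Fin d) => (p * ‖v‖ ^ (p-2)) • v :=
        ((measurable_norm.pow measurable_const).const_mul p).smul measurable_id
      have hGm : Measurable[⨆ i ∈ Finset.Ico 1 (k+1),
          MeasurableSpace.comap (X i) inferInstance]
          (fun ω => (p * ‖S ω‖ ^ (p-2)) • S ω) := hφ.comp hSm
      have hb : Integrable (fun ω => ‖(p * ‖S ω‖ ^ (p-2)) • S ω‖ * ‖Y ω‖) P := by
        refine ((hSp.add hYp).const_mul p).mono' ?_ ?_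
        · exact ((hφ.comp hSmeas).norm.mul (hmeas (k+1)).norm).aestronglyMeasurable
        · filter_upwards with ω
          have h2 : (0:ℝ) ≤ ‖S ω‖ ^ (p-2) := Real.rpow_nonneg (norm_nonneg _) _
          rw [Real.norm_eq_abs, abs_of_nonneg (mul_nonneg (norm_nonneg _) (norm_nonneg _)),
            norm_smul, Real.norm_eq_abs, abs_of_nonneg (mul_nonneg hp0.le h2)]
          calc p * ‖S ω‖ ^ (p-2) * ‖S ω‖ * ‖Y ω‖
              = p * (‖S ω‖ ^ (p-2) * ‖S ω‖ * ‖Y ω‖) := by ring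
            _ ≤ p * (‖S ω‖ ^ p + ‖Y ω‖ ^ p) := mul_le_mul_of_nonneg_left
                (vbe_norm_bound hp1 (norm_nonneg _) (norm_nonneg _)) hp0.le
      have h1 := vbe_integral_inner_eq_zero P hle hGm (hmeas (k+1)) hYint hb hcond
      rw [← h1]
      congr 1
      funext ω
      rw [real_inner_smul_left]
      ring
    -- put it together
    have hptint : Integrable (fun ω =>
        ‖S ω‖ ^ p + p * (‖S ω‖ ^ (p-2) * ⟪S ω, Y ω⟫_ℝ) + 2 * ‖Y ω‖ ^ p) P :=
      (hSp.add hMint).add (hYp.const_mul 2)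
    have hmono : ∫ ω, ‖∑ j ∈ Finset.Icc 1 (k+1), X j ω‖ ^ p ∂P
        ≤ ∫ ω, (‖S ω‖ ^ p + p * (‖S ω‖ ^ (p-2) * ⟪S ω, Y ω⟫_ℝ) + 2 * ‖Y ω‖ ^ p) ∂P := by
      refine integral_mono hS'p hptint fun ω => ?_
      rw [hsum ω]
      exact vbe_pointwise hp1 hp2 (S ω) (Y ω)
    have hsplit : ∫ ω, (‖S ω‖ ^ p + p * (‖S ω‖ ^ (p-2) * ⟪S ω, Y ω⟫_ℝ) + 2 * ‖Y ω‖ ^ p) ∂P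
        = ∫ ω, ‖S ω‖ ^ p ∂P + ∫ ω, p * (‖S ω‖ ^ (p-2) * ⟪S ω, Y ω⟫_ℝ) ∂P
          + 2 * ∫ ω, ‖Y ω‖ ^ p ∂P := by
      have hSM : Integrable (fun ω => ‖S ω‖ ^ p + p * (‖S ω‖ ^ (p-2) * ⟪S ω, Y ω⟫_ℝ)) P :=
        hSp.add hMint
      rw [integral_add hSM (hYp.const_mul 2), integral_add hSp hMint, integral_const_mul, integral_const_mul]
    have hfin : ∫ ω, ‖∑ j ∈ Finset.Icc 1 (k+1), X j ω‖ ^ p ∂P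
        ≤ ∫ ω, ‖S ω‖ ^ p ∂P + 2 * ∫ ω, ‖Y ω‖ ^ p ∂P := by
      rw [hsplit, hMzero] at hmono
      linarith
    have hih := ih hk
    rw [Finset.sum_Icc_succ_top (show 1 ≤ k + 1 by omega)
      (f := fun j => ∫ ω, ‖X j ω‖ ^ p ∂P)]
    have : ∫ ω, ‖S ω‖ ^ p ∂P ≤ 2 * ∑ j ∈ Finset.Icc 1 k, ∫ ω, ‖X j ω‖ ^ p ∂P := hih
    calc ∫ ω, ‖∑ j ∈ Finset.Icc 1 (k+1), X j ω‖ ^ p ∂P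
        ≤ ∫ ω, ‖S ω‖ ^ p ∂P + 2 * ∫ ω, ‖Y ω‖ ^ p ∂P := hfin
      _ ≤ 2 * ∑ j ∈ Finset.Icc 1 k, (∫ ω, ‖X j ω‖ ^ p ∂P) + 2 * ∫ ω, ‖Y ω‖ ^ p ∂P := by
          linarith
      _ = 2 * (∑ j ∈ Finset.Icc 1 k, (∫ ω, ‖X j ω‖ ^ p ∂P) + ∫ ω, ‖X (k+1) ω‖ ^ p ∂P) := by
          rw [hY]; ring
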